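/- Let g ≥ 3 be an integer and set θ = π/g. The subset S = {z ∈ ℂ : |z| ≤ 1 and |Complex.arg z| ≤ −Real.log |z| / Real.tan θ} of the complex plane has two-dimensional Lebesgue measure equal to (1 − exp(−2π·tan θ))/(2·tan θ). Consequently, dividing by the area g·sin θ·cos θ of the regular g-gon with vertices at the g-th roots of unity, the fraction of the polygon covered by this set equals (1 − e^{−2π·tan(π/g)})/(2·g·sin²(π/g)). -/

import Mathlib

open MeasureTheory Real

private lemma exp_intervalIntegral (c a b : ℝ) (hc : c ≠ 0) :
    ∫ x in a..b, Real.exp (c * x) = (Real.exp (c * b) - Real.exp (c * a)) / c := by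
  rw [intervalIntegral.integral_comp_mul_left (fun x => Real.exp x) hc, integral_exp,
    smul_eq_mul]
  field_simp

private lemma area_lemma (t : ℝ) (ht : 0 < t) :
    ∫ p : ℝ × ℝ,
      ({q : ℝ × ℝ | q.2 ∈ Set.Ioo (-π) π ∧ q.1 ∈ Set.Ioc 0 (Real.exp (-(|q.2| * t)))}).indicator
        (fun q => q.1) p
    = (1 - Real.exp (-(2 * π * t))) / (2 * t) := by
  set E : Set (ℝ × ℝ) :=
    {q : ℝ × ℝ | q.2 ∈ Set.Ioo (-π) π ∧ q.1 ∈ Set.Ioc 0 (Real.exp (-(|q.2| * t)))} with hEdef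
  have hE : MeasurableSet E := by
    have : E = {q : ℝ × ℝ | -π < q.2} ∩ {q : ℝ × ℝ | q.2 < π} ∩ {q : ℝ × ℝ | 0 < q.1} ∩
        {q : ℝ × ℝ | q.1 ≤ Real.exp (-(|q.2| * t))} := by
      ext q; simp [hEdef, Set.mem_Ioo, Set.mem_Ioc]; tauto
    rw [this]
    refine (((measurableSet_lt measurable_const measurable_snd).inter
      (measurableSet_lt measurable_snd measurable_const)).inter
      (measurableSet_lt measurable_const measurable_fst)).inter
      (measurableSet_le measurable_fst ?_)
    exact (Real.measurable_exp.comp ((measurable_snd.abs.mul_const t).neg))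
  have hsub : E ⊆ Set.Ioc (0:ℝ) 1 ×ˢ Set.Ioo (-π) π := by
    rintro ⟨r, φ⟩ ⟨h1, h2, h3⟩
    refine ⟨⟨h2, h3.trans ?_⟩, h1⟩
    exact Real.exp_le_one_iff.mpr (neg_nonpos.mpr (by positivity))
  have hK : volume (Set.Ioc (0:ℝ) 1 ×ˢ Set.Ioo (-π) π) ≠ ⊤ := by
    rw [Measure.volume_eq_prod, Measure.prod_prod]
    exact ENNReal.mul_ne_top (by simp [Real.volume_Ioc]) (by simp [Real.volume_Ioo])
  have hintK : IntegrableOn (fun q : ℝ × ℝ => q.1) (Set.Ioc (0:ℝ) 1 ×ˢ Set.Ioo (-π) π) := by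
    refine Measure.integrableOn_of_bounded hK measurable_fst.aestronglyMeasurable
      (M := 1) ?_
    filter_upwards [ae_restrict_mem ((measurableSet_Ioc.prod measurableSet_Ioo))] with q hq
    have h1 := hq.1.1
    have h2 := hq.1.2
    rw [Real.norm_eq_abs, abs_of_pos h1]
    exact h2
  have hint : Integrable (E.indicator (fun q : ℝ × ℝ => q.1)) :=
    (hintK.mono_set hsub).integrable_indicator hE
  rw [Measure.volume_eq_prod] at hint ⊢
  rw [integral_prod_symm _ hint]
  have inner_eq : ∀ φ : ℝ, (∫ r : ℝ, E.indicator (fun q : ℝ × ℝ => q.1) (r, φ))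
      = (Set.Ioo (-π) π).indicator (fun φ => Real.exp (-(2 * (|φ| * t))) / 2) φ := by
    intro φ
    by_cases hφ : φ ∈ Set.Ioo (-π) π
    · have hfun : (fun r : ℝ => E.indicator (fun q : ℝ × ℝ => q.1) (r, φ))
          = (Set.Ioc (0:ℝ) (Real.exp (-(|φ| * t)))).indicator (fun r => r) := by
        funext r
        by_cases hr : r ∈ Set.Ioc (0:ℝ) (Real.exp (-(|φ| * t)))
        · rw [Set.indicator_of_mem hr, Set.indicator_of_mem (show (r, φ) ∈ E from ⟨hφ, hr⟩)]
        · rw [Set.indicator_of_notMem hr, Set.indicator_of_notMem (fun hmem => hr hmem.2)]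
      rw [hfun, MeasureTheory.integral_indicator measurableSet_Ioc,
        ← intervalIntegral.integral_of_le (Real.exp_pos _).le, integral_id,
        Set.indicator_of_mem hφ]
      rw [sq, ← Real.exp_add]
      ring_nf
    · rw [Set.indicator_of_notMem hφ]
      have hfun : (fun r : ℝ => E.indicator (fun q : ℝ × ℝ => q.1) (r, φ))
          = fun _ => (0:ℝ) := by
        funext r
        exact Set.indicator_of_notMem (fun hmem => hφ hmem.1) _
      rw [hfun, integral_zero]
  simp only [inner_eq]
  have hπ : -π ≤ π := by linarith [Real.pi_pos]
  rw [MeasureTheory.integral_indicator measurableSet_Ioo, ← integral_Ioc_eq_integral_Ioo,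
    ← intervalIntegral.integral_of_le hπ]
  have hcont : Continuous (fun φ : ℝ => Real.exp (-(2 * (|φ| * t))) / 2) := by
    continuity
  have hsplit := intervalIntegral.integral_add_adjacent_intervals (μ := volume)
    (hcont.intervalIntegrable (-π) 0) (hcont.intervalIntegrable 0 π)
  rw [← hsplit]
  have hp1 : (∫ x in (-π)..(0:ℝ), Real.exp (-(2 * (|x| * t))) / 2)
      = (∫ x in (-π)..(0:ℝ), Real.exp ((2 * t) * x) / 2) := by
    apply intervalIntegral.integral_congr
    intro x hx
    rw [Set.uIcc_of_le (by linarith [Real.pi_pos] : -π ≤ (0:ℝ))] at hx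
    show Real.exp (-(2 * (|x| * t))) / 2 = Real.exp ((2 * t) * x) / 2
    rw [abs_of_nonpos hx.2]; ring_nf
  have hp2 : (∫ x in (0:ℝ)..π, Real.exp (-(2 * (|x| * t))) / 2)
      = (∫ x in (0:ℝ)..π, Real.exp ((-(2 * t)) * x) / 2) := by
    apply intervalIntegral.integral_congr
    intro x hx
    rw [Set.uIcc_of_le Real.pi_pos.le] at hx
    show Real.exp (-(2 * (|x| * t))) / 2 = Real.exp ((-(2 * t)) * x) / 2
    rw [abs_of_nonneg hx.1]; ring_nf
  rw [hp1, hp2]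
  have h2t : (2 * t) ≠ 0 := by positivity
  have h2t' : (-(2 * t)) ≠ 0 := by simpa using h2t
  rw [intervalIntegral.integral_div, intervalIntegral.integral_div,
    exp_intervalIntegral _ _ _ h2t, exp_intervalIntegral _ _ _ h2t']
  have e1 : (2 * t) * (-π) = -(2 * π * t) := by ring
  have e2 : (-(2 * t)) * π = -(2 * π * t) := by ring
  have e3 : (2 * t) * (0:ℝ) = 0 := by ring
  have e4 : (-(2 * t)) * (0:ℝ) = 0 := by ring
  rw [e1, e2, e3, e4, Real.exp_zero]
  field_simp
  ring

theorem planar_cyclic_group_accessible_area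
    (g : ℕ) (hg : 3 ≤ g) (θ : ℝ) (hθ : θ = Real.pi / g)
    (S : Set ℂ)
    (hS : S = {z : ℂ | ‖z‖ ≤ 1 ∧
      |Complex.arg z| ≤ -Real.log ‖z‖ / Real.tan θ}) :
    volume S = ENNReal.ofReal ((1 - Real.exp (-(2 * Real.pi * Real.tan θ))) / (2 * Real.tan θ)) ∧
    volume S / ENNReal.ofReal ((g : ℝ) * Real.sin θ * Real.cos θ) =
      ENNReal.ofReal
        ((1 - Real.exp (-(2 * Real.pi * Real.tan θ))) / (2 * (g : ℝ) * Real.sin θ ^ 2)) := by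
  have hg3 : (3:ℝ) ≤ (g:ℝ) := by exact_mod_cast hg
  have hθ0 : 0 < θ := by rw [hθ]; exact div_pos Real.pi_pos (by linarith)
  have hθ2 : θ < π / 2 := by
    rw [hθ]
    have h1 : π / (g:ℝ) ≤ π / 3 := by gcongr <;> linarith [Real.pi_pos]
    have h2 : π / 3 < π / 2 := by
      have := Real.pi_pos; linarith [div_lt_div_of_pos_left Real.pi_pos (by norm_num : (0:ℝ) < 2) (by norm_num : (2:ℝ) < 3)]
    linarith
  have ht : 0 < Real.tan θ := Real.tan_pos_of_pos_of_lt_pi_div_two hθ0 hθ2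
  set t := Real.tan θ with htdef
  set E : Set (ℝ × ℝ) :=
    {q : ℝ × ℝ | q.2 ∈ Set.Ioo (-π) π ∧ q.1 ∈ Set.Ioc 0 (Real.exp (-(|q.2| * t)))} with hEdef
  have hSm : MeasurableSet S := by
    rw [hS, Set.setOf_and]
    refine (measurableSet_le continuous_norm.measurable measurable_const).inter
      (measurableSet_le Complex.measurable_arg.abs ?_)
    exact ((Real.measurable_log.comp continuous_norm.measurable).neg).div_const t
  have hfin : volume S ≠ ⊤ := by
    have hsub : S ⊆ Metric.closedBall (0:ℂ) 1 := by
      intro z hz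
      rw [hS] at hz
      simpa [Metric.mem_closedBall, Complex.dist_eq] using hz.1
    exact ne_top_of_le_ne_top measure_closedBall_lt_top.ne (measure_mono hsub)
  have hpt : ∀ p ∈ polarCoord.target,
      p.1 • S.indicator (1 : ℂ → ℝ) (Complex.polarCoord.symm p)
        = E.indicator (fun q : ℝ × ℝ => q.1) p := by
    rintro ⟨r, φ⟩ hp
    rw [polarCoord_target] at hp
    obtain ⟨hr, hφ⟩ := hp
    have hr0 : (0:ℝ) < r := hr
    have habs : ‖Complex.polarCoord.symm (r, φ)‖ = r := by
      rw [Complex.norm_polarCoord_symm]; exact abs_of_pos hr0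
    have harg : Complex.arg (Complex.polarCoord.symm (r, φ)) = φ := by
      rw [Complex.polarCoord_symm_apply]
      simp only
      rw [Complex.arg_real_mul _ hr0, Complex.ofReal_cos, Complex.ofReal_sin,
        Complex.arg_cos_add_sin_mul_I ⟨hφ.1, hφ.2.le⟩]
    have hiff : Complex.polarCoord.symm (r, φ) ∈ S ↔ r ≤ Real.exp (-(|φ| * t)) := by
      rw [hS]
      simp only [Set.mem_setOf_eq, habs, harg]
      constructor
      · rintro ⟨h1, h2⟩
        have h3 : |φ| * t ≤ -Real.log r := (le_div_iff₀ ht).mp h2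
        exact (Real.log_le_iff_le_exp hr0).mp (by linarith)
      · intro h
        have h3 : Real.log r ≤ -(|φ| * t) := (Real.log_le_iff_le_exp hr0).mpr h
        have h4 : Real.log r ≤ 0 := le_trans h3 (neg_nonpos.mpr (by positivity))
        constructor
        · rw [← Real.exp_log hr0]
          exact Real.exp_le_one_iff.mpr h4
        · rw [le_div_iff₀ ht]; linarith
    by_cases hc : r ≤ Real.exp (-(|φ| * t))
    · rw [Set.indicator_of_mem (hiff.mpr hc),
        Set.indicator_of_mem (show ((r, φ) : ℝ × ℝ) ∈ E from ⟨hφ, hr0, hc⟩)]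
      simp
    · rw [Set.indicator_of_notMem (fun h => hc (hiff.mp h)),
        Set.indicator_of_notMem (show ((r, φ) : ℝ × ℝ) ∉ E from fun h => hc h.2.2)]
      simp
  have hEsub : E ⊆ polarCoord.target := by
    rw [polarCoord_target]
    rintro ⟨r, φ⟩ ⟨h1, h2⟩
    exact ⟨h2.1, h1⟩
  have hEmeas : MeasurableSet E := by
    have : E = {q : ℝ × ℝ | -π < q.2} ∩ {q : ℝ × ℝ | q.2 < π} ∩ {q : ℝ × ℝ | 0 < q.1} ∩
        {q : ℝ × ℝ | q.1 ≤ Real.exp (-(|q.2| * t))} := by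
      ext q; simp [hEdef, Set.mem_Ioo, Set.mem_Ioc]; tauto
    rw [this]
    refine (((measurableSet_lt measurable_const measurable_snd).inter
      (measurableSet_lt measurable_snd measurable_const)).inter
      (measurableSet_lt measurable_const measurable_fst)).inter
      (measurableSet_le measurable_fst ?_)
    exact (Real.measurable_exp.comp ((measurable_snd.abs.mul_const t).neg))
  have key : volume S = ENNReal.ofReal ((1 - Real.exp (-(2 * π * t))) / (2 * t)) := by
    have h1 : (volume S).toReal = ∫ p : ℝ × ℝ, E.indicator (fun q : ℝ × ℝ => q.1) p := by
      rw [← measureReal_def, ← MeasureTheory.integral_indicator_one hSm,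
        ← Complex.integral_comp_polarCoord_symm (S.indicator (1 : ℂ → ℝ)),
        MeasureTheory.setIntegral_congr_fun polarCoord.open_target.measurableSet
          (fun p hp => hpt p hp),
        MeasureTheory.setIntegral_indicator hEmeas,
        Set.inter_eq_self_of_subset_right hEsub,
        ← MeasureTheory.integral_indicator hEmeas]
    rw [← ENNReal.ofReal_toReal hfin, h1, hEdef, area_lemma t ht]
  refine ⟨key, ?_⟩
  have hs0 : 0 < Real.sin θ := Real.sin_pos_of_pos_of_lt_pi hθ0 (by linarith [Real.pi_pos])
  have hc0 : 0 < Real.cos θ := Real.cos_pos_of_mem_Ioo ⟨by linarith, hθ2⟩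
  have hD : 0 < (g : ℝ) * Real.sin θ * Real.cos θ :=
    mul_pos (mul_pos (by linarith) hs0) hc0
  rw [key, ← ENNReal.ofReal_div_of_pos hD]
  congr 1
  have htsc : t = Real.sin θ / Real.cos θ := Real.tan_eq_sin_div_cos θ
  rw [htsc]
  field_simp
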